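/- Let M_t ≥ 1, M_r ≥ 1 be integers, M_* = min(M_t, M_r), b > 0 real, and let d* : [0, M_*] → ℝ be the piecewise-linear function connecting the points (k, (M_t − k)(M_r − k)) for k = 0, 1, …, M_*. For each n ≥ 1 define Δ_n = sup over all t ∈ ℝ^n with t_i ≥ 0 and Σ_{i=1}^n t_i = 1 and all r ∈ ℝ^n with 0 ≤ r_1 ≤ ⋯ ≤ r_n ≤ M_*, of min_{0 ≤ k ≤ n} { d*(r_{k+1}) + b·Σ_{i=1}^k t_i r_i } (where d*(r_{n+1}) is interpreted as 0), and define Δ̂_n identically except with t fixed to the equal allocation t_i = 1/n for all i. Then the sequence (Δ_n) is nondecreasing and bounded above by d*(0) = M_t·M_r (hence convergent), and lim_{n→∞} Δ̂_n = lim_{n→∞} Δ_n. -/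

import Mathlib

open Filter Finset

/-- The feasible set for the optimized `n`-layer exponent. -/
def lsSet (Mt Mr : ℕ) (b : ℝ) (dstar : ℝ → ℝ) (n : ℕ) : Set ℝ :=
  { v : ℝ | ∃ t r : ℕ → ℝ,
      (∀ i, 0 ≤ t i) ∧ (∑ i ∈ Finset.range n, t i) = 1 ∧
      (0 ≤ r 0) ∧ (∀ i j, i ≤ j → j < n → r i ≤ r j) ∧
      (∀ i < n, r i ≤ (min Mt Mr : ℝ)) ∧
      v = (Finset.range (n + 1)).inf' Finset.nonempty_range_add_one (fun k =>
        if k = n then b * ∑ i ∈ Finset.range n, t i * r i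
        else dstar (r k) + b * ∑ i ∈ Finset.range k, t i * r i) }

/-- The feasible set for the equal-allocation `n`-layer exponent. -/
def lsHat (Mt Mr : ℕ) (b : ℝ) (dstar : ℝ → ℝ) (n : ℕ) : Set ℝ :=
  { v : ℝ | ∃ r : ℕ → ℝ,
      (0 ≤ r 0) ∧ (∀ i j, i ≤ j → j < n → r i ≤ r j) ∧
      (∀ i < n, r i ≤ (min Mt Mr : ℝ)) ∧
      v = (Finset.range (n + 1)).inf' Finset.nonempty_range_add_one (fun k =>
        if k = n then b * ∑ i ∈ Finset.range n, (1 / (n : ℝ)) * r i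
        else dstar (r k) + b * ∑ i ∈ Finset.range k, (1 / (n : ℝ)) * r i) }

/-- Bounds for piecewise linear `dstar` on `[0, min Mt Mr]`. -/
lemma dstar_bounds (Mt Mr : ℕ) (hMt : 1 ≤ Mt) (hMr : 1 ≤ Mr) (dstar : ℝ → ℝ)
    (hd : ∀ k : ℕ, k < min Mt Mr → ∀ x ∈ Set.Icc (k : ℝ) ((k : ℝ) + 1),
      dstar x = ((Mt : ℝ) - k) * ((Mr : ℝ) - k)
        + (x - k) * (((Mt : ℝ) - (k + 1)) * ((Mr : ℝ) - (k + 1))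
          - ((Mt : ℝ) - k) * ((Mr : ℝ) - k)))
    (x : ℝ) (hx0 : 0 ≤ x) (hxM : x ≤ (min Mt Mr : ℝ)) :
    0 ≤ dstar x ∧ dstar x ≤ (Mt : ℝ) * Mr := by
  set M := min Mt Mr with hMdef
  have hM1 : 1 ≤ M := le_min hMt hMr
  have hxM' : x ≤ (M : ℝ) := by rw [hMdef]; exact_mod_cast hxM
  set k : ℕ := min ⌊x⌋₊ (M - 1) with hk
  have hkM : k < M := lt_of_le_of_lt (min_le_right _ _) (Nat.sub_lt hM1 one_pos)
  have hk1M : k + 1 ≤ M := hkM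
  have hkle : (k : ℝ) ≤ x := by
    refine le_trans ?_ (Nat.floor_le hx0)
    exact_mod_cast min_le_left _ _
  have hxle : x ≤ (k : ℝ) + 1 := by
    rcases le_or_gt (⌊x⌋₊) (M - 1) with h | h
    · have : k = ⌊x⌋₊ := min_eq_left h
      rw [this]
      exact (Nat.lt_floor_add_one x).le
    · have hkeq : k = M - 1 := min_eq_right h.le
      have : ((M - 1 : ℕ) : ℝ) + 1 = (M : ℝ) := by
        have := Nat.cast_sub hM1 (R := ℝ)
        push_cast [this]
        ring
      rw [hkeq, this]
      exact hxM'
  rw [hd k hkM x ⟨hkle, hxle⟩]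
  have hθ0 : 0 ≤ x - k := by linarith
  have hθ1 : x - k ≤ 1 := by linarith
  have hMt' : (k : ℝ) + 1 ≤ (Mt : ℝ) := by
    exact_mod_cast le_trans hk1M (min_le_left _ _)
  have hMr' : (k : ℝ) + 1 ≤ (Mr : ℝ) := by
    exact_mod_cast le_trans hk1M (min_le_right _ _)
  have hk0 : (0:ℝ) ≤ (k:ℝ) := Nat.cast_nonneg k
  constructor
  · nlinarith [mul_nonneg (sub_nonneg.2 hMt') (sub_nonneg.2 hMr')]
  · nlinarith [mul_nonneg (sub_nonneg.2 hMt') (sub_nonneg.2 hMr'),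
      mul_nonneg hk0 (Nat.cast_nonneg (α := ℝ) Mr),
      mul_nonneg hk0 (Nat.cast_nonneg (α := ℝ) Mt),
      mul_nonneg hk0 hk0]

lemma key_hat (Mt Mr : ℕ) (b : ℝ) (hb : 0 < b) (dstar : ℝ → ℝ)
    (m : ℕ) (hm : 1 ≤ m) (t r : ℕ → ℝ)
    (ht0 : ∀ i, 0 ≤ t i) (hts : ∑ i ∈ Finset.range m, t i = 1)
    (hr0 : 0 ≤ r 0) (hrm : ∀ i j, i ≤ j → j < m → r i ≤ r j)
    (hru : ∀ i < m, r i ≤ (min Mt Mr : ℝ))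
    (n : ℕ) (hn : 1 ≤ n) :
    ∃ v' ∈ lsHat Mt Mr b dstar n,
      (Finset.range (m + 1)).inf' Finset.nonempty_range_add_one (fun k =>
        if k = m then b * ∑ i ∈ Finset.range m, t i * r i
        else dstar (r k) + b * ∑ i ∈ Finset.range k, t i * r i)
        - b * m * (min Mt Mr : ℝ) / n ≤ v' := by
  classical
  set R : ℝ := (min Mt Mr : ℝ) with hR
  set f : ℕ → ℝ := fun k =>
    if k = m then b * ∑ i ∈ Finset.range m, t i * r i
    else dstar (r k) + b * ∑ i ∈ Finset.range k, t i * r i with hf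
  set v : ℝ := (Finset.range (m + 1)).inf' Finset.nonempty_range_add_one f with hv
  have hn0 : (0:ℝ) < n := by exact_mod_cast hn
  have hR0 : (0:ℝ) ≤ R := le_min (Nat.cast_nonneg _) (Nat.cast_nonneg _)
  set c : ℕ → ℝ := fun i => ∑ l ∈ Finset.range i, t l with hc
  set N : ℕ → ℕ := fun i => ⌈(n : ℝ) * c i⌉₊ with hN
  set φ : ℕ → ℕ := fun j => Nat.findGreatest (fun i => N i ≤ j) m with hφ
  have hc0 : ∀ i, 0 ≤ c i := fun i => Finset.sum_nonneg fun l _ => ht0 l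
  have hcmono : Monotone c := fun i j h =>
    Finset.sum_le_sum_of_subset_of_nonneg (Finset.range_subset_range.2 h) (fun l _ _ => ht0 l)
  have hN0 : N 0 = 0 := by simp [hN, hc]
  have hNm : N m = n := by
    simp only [hN, hc]
    rw [hts, mul_one, Nat.ceil_natCast]
  have hNmono : Monotone N := fun i j h =>
    Nat.ceil_mono (mul_le_mul_of_nonneg_left (hcmono h) (Nat.cast_nonneg n))
  have hφle : ∀ j, φ j ≤ m := fun j => Nat.findGreatest_le m
  have hφspec : ∀ j, N (φ j) ≤ j := fun j =>
    Nat.findGreatest_spec (P := fun i => N i ≤ j) (Nat.zero_le m) (by simp [hN0])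
  have hφge : ∀ j i, i ≤ m → N i ≤ j → i ≤ φ j := fun j i him hij =>
    Nat.le_findGreatest him hij
  have hφlt : ∀ j, j < n → φ j < m := by
    intro j hj
    rcases lt_or_eq_of_le (hφle j) with h | h
    · exact h
    · exfalso
      have h2 := hφspec j
      rw [h, hNm] at h2
      omega
  have hφmono : ∀ i j, i ≤ j → φ i ≤ φ j := fun i j h =>
    hφge j (φ i) (hφle i) (le_trans (hφspec i) h)
  set r' : ℕ → ℝ := fun j => r (φ j) with hr'
  have hr'nn : ∀ j, j < n → 0 ≤ r' j := fun j hj =>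
    le_trans hr0 (hrm 0 (φ j) (Nat.zero_le _) (hφlt j hj))
  have hrnn : ∀ i, i < m → 0 ≤ r i := fun i hi =>
    le_trans hr0 (hrm 0 i (Nat.zero_le _) hi)
  -- main counting estimate
  have hsum : ∀ i, i ≤ m →
      (n : ℝ) * (∑ l ∈ Finset.range i, t l * r l) - i * R
        ≤ ∑ j ∈ Finset.range (N i), r' j := by
    intro i
    induction i with
    | zero => intro _; simp [hN0]
    | succ i ih =>
      intro hi1
      have hi : i < m := hi1
      have hNle : N i ≤ N (i + 1) := hNmono (Nat.le_succ i)
      have hsplit : ∑ j ∈ Finset.range (N (i+1)), r' j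
          = (∑ j ∈ Finset.range (N i), r' j) + ∑ j ∈ Finset.Ico (N i) (N (i+1)), r' j := by
        simp only [Finset.range_eq_Ico]
        exact (Finset.sum_Ico_consecutive _ (Nat.zero_le _) hNle).symm
      have hφeq : ∀ j ∈ Finset.Ico (N i) (N (i+1)), r' j = r i := by
        intro j hj
        rw [Finset.mem_Ico] at hj
        have h1 : i ≤ φ j := hφge j i hi.le hj.1
        have h2 : φ j ≤ i := by
          by_contra h
          push_neg at h
          have h' : i + 1 ≤ φ j := h
          have := le_trans (hNmono h') (hφspec j)
          omega
        rw [hr']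
        simp only []
        congr 1
        omega
      have hIco : ∑ j ∈ Finset.Ico (N i) (N (i+1)), r' j
          = ((N (i+1) - N i : ℕ) : ℝ) * r i := by
        rw [Finset.sum_congr rfl hφeq, Finset.sum_const, Nat.card_Ico, nsmul_eq_mul]
      have hcast : ((N (i+1) - N i : ℕ) : ℝ) = (N (i+1) : ℝ) - N i :=
        Nat.cast_sub hNle
      have hup : (N i : ℝ) ≤ (n : ℝ) * c i + 1 :=
        (Nat.ceil_lt_add_one (mul_nonneg (Nat.cast_nonneg n) (hc0 i))).le
      have hdown : (n : ℝ) * c (i+1) ≤ (N (i+1) : ℝ) := Nat.le_ceil _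
      have hct : c (i+1) = c i + t i := Finset.sum_range_succ t i
      have hri0 : 0 ≤ r i := hrnn i hi
      have hriR : r i ≤ R := hru i hi
      have h1 : (n:ℝ) * t i - 1 ≤ (N (i+1) : ℝ) - N i := by
        rw [hct] at hdown; nlinarith
      have h2 : (n:ℝ) * (t i * r i) - R ≤ ((N (i+1):ℝ) - N i) * r i := by
        nlinarith [mul_le_mul_of_nonneg_right h1 hri0]
      have h3 := ih (by omega)
      rw [hsplit, hIco, hcast, Finset.sum_range_succ]
      push_cast
      nlinarith [h3, h2]
  -- the arithmetic helper
  have harith : ∀ (w D A S : ℝ), w ≤ D + b * A → (n:ℝ) * A - (m:ℝ) * R ≤ S →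
      w - b * m * R / n ≤ D + b * (S / n) := by
    intro w D A S h1 h2
    have h3 : b * ((n:ℝ) * A - m * R) ≤ b * S := mul_le_mul_of_nonneg_left h2 hb.le
    have hkey : (w - b * ↑m * R / ↑n) * n ≤ (D + b * (S / n)) * n := by
      have e2 : (w - b * ↑m * R / ↑n) * n = w * n - b * ↑m * R := by
        field_simp
      have e3 : (D + b * (S / n)) * n = D * n + b * S := by
        field_simp
      rw [e2, e3]
      nlinarith [mul_le_mul_of_nonneg_right h1 hn0.le, h3]
    exact le_of_mul_le_mul_right hkey hn0
  refine ⟨_, ⟨r', hr'nn 0 (by omega), fun i j hij hjn => hrm (φ i) (φ j) (hφmono i j hij) (hφlt j hjn),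
      fun i hin => hru (φ i) (hφlt i hin), rfl⟩, ?_⟩
  refine Finset.le_inf' _ _ ?_
  intro k hk
  rw [Finset.mem_range] at hk
  by_cases hkn : k = n
  · rw [if_pos hkn]
    have hS : (n:ℝ) * (∑ i ∈ Finset.range m, t i * r i) - m * R
        ≤ ∑ j ∈ Finset.range n, r' j := by
      have h := hsum m le_rfl
      rwa [hNm] at h
    have hfm : f m = b * ∑ i ∈ Finset.range m, t i * r i := by
      simp [hf]
    have hvle : v ≤ b * ∑ i ∈ Finset.range m, t i * r i :=
      hfm ▸ Finset.inf'_le f (Finset.self_mem_range_succ m)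
    have hsum_eq : ∑ j ∈ Finset.range n, (1/(n:ℝ)) * r' j
        = (∑ j ∈ Finset.range n, r' j) / n := by
      rw [← Finset.mul_sum]; ring
    rw [hsum_eq]
    have h := harith v 0 (∑ i ∈ Finset.range m, t i * r i) (∑ j ∈ Finset.range n, r' j)
      (by simpa using hvle) hS
    linarith
  · rw [if_neg hkn]
    have hkn' : k < n := lt_of_le_of_ne (by omega) hkn
    have him : φ k < m := hφlt k hkn'
    have hfk : f (φ k) = dstar (r (φ k)) + b * ∑ i ∈ Finset.range (φ k), t i * r i := by
      simp only [hf]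
      rw [if_neg him.ne]
    have hvle : v ≤ dstar (r (φ k)) + b * ∑ i ∈ Finset.range (φ k), t i * r i :=
      hfk ▸ Finset.inf'_le f (Finset.mem_range.2 (by omega))
    have hsub : ∑ j ∈ Finset.range (N (φ k)), r' j ≤ ∑ j ∈ Finset.range k, r' j :=
      Finset.sum_le_sum_of_subset_of_nonneg (Finset.range_subset_range.2 (hφspec k))
        (fun j hj _ => hr'nn j (lt_trans (Finset.mem_range.1 hj) hkn'))
    have hS : (n:ℝ) * (∑ i ∈ Finset.range (φ k), t i * r i) - m * R
        ≤ ∑ j ∈ Finset.range k, r' j := by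
      have h1 := hsum (φ k) him.le
      have h2 : ((φ k : ℕ):ℝ) * R ≤ (m:ℝ) * R :=
        mul_le_mul_of_nonneg_right (by exact_mod_cast him.le) hR0
      linarith
    have hsum_eq : ∑ j ∈ Finset.range k, (1/(n:ℝ)) * r' j
        = (∑ j ∈ Finset.range k, r' j) / n := by
      rw [← Finset.mul_sum]; ring
    rw [hsum_eq]
    exact harith v (dstar (r (φ k))) _ _ hvle hS

lemma mono_step (Mt Mr : ℕ) (b : ℝ) (dstar : ℝ → ℝ)
    (hd0 : ∀ x, 0 ≤ x → x ≤ (min Mt Mr : ℝ) → 0 ≤ dstar x)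
    (n : ℕ) (hn : 1 ≤ n) (v : ℝ) (hv : v ∈ lsSet Mt Mr b dstar n) :
    ∃ v' ∈ lsSet Mt Mr b dstar (n + 1), v ≤ v' := by
  classical
  obtain ⟨t, r, ht0, hts, hr0, hrm, hru, rfl⟩ := hv
  set f : ℕ → ℝ := fun k =>
    if k = n then b * ∑ i ∈ Finset.range n, t i * r i
    else dstar (r k) + b * ∑ i ∈ Finset.range k, t i * r i with hf
  set v : ℝ := (Finset.range (n + 1)).inf' Finset.nonempty_range_add_one f with hv
  set t' : ℕ → ℝ := fun i => if i < n then t i else 0 with ht'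
  set r' : ℕ → ℝ := fun i => if i < n then r i else r (n - 1) with hr'
  have hsum_eq : ∀ k, k ≤ n →
      ∑ i ∈ Finset.range k, t' i * r' i = ∑ i ∈ Finset.range k, t i * r i := by
    intro k hk
    refine Finset.sum_congr rfl ?_
    intro i hi
    rw [Finset.mem_range] at hi
    have : i < n := by omega
    simp only [ht', hr', if_pos this]
  have hrn1 : 0 ≤ r (n - 1) := le_trans hr0 (hrm 0 (n-1) (Nat.zero_le _) (by omega))
  have hrn1R : r (n - 1) ≤ (min Mt Mr : ℝ) := hru (n-1) (by omega)
  refine ⟨_, ⟨t', r', ?_, ?_, ?_, ?_, ?_, rfl⟩, ?_⟩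
  · intro i
    by_cases h : i < n
    · simp only [ht', if_pos h]; exact ht0 i
    · simp only [ht', if_neg h]; exact le_rfl
  · rw [Finset.sum_range_succ]
    have h1 : t' n = 0 := by simp [ht']
    have h2 : ∑ i ∈ Finset.range n, t' i = ∑ i ∈ Finset.range n, t i := by
      refine Finset.sum_congr rfl ?_
      intro i hi
      rw [Finset.mem_range] at hi
      simp [ht', if_pos hi]
    rw [h1, h2, hts, add_zero]
  · simp only [hr', if_pos (by omega : 0 < n)]; exact hr0
  · intro i j hij hj
    by_cases h : j < n
    · have hi : i < n := by omega
      simp only [hr', if_pos h, if_pos hi]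
      exact hrm i j hij h
    · have hj' : j = n := by omega
      simp only [hr', if_neg (by omega : ¬ j < n)]
      by_cases hi : i < n
      · rw [if_pos hi]
        exact hrm i (n-1) (by omega) (by omega)
      · rw [if_neg hi]
  · intro i hi
    by_cases h : i < n
    · simp only [hr', if_pos h]; exact hru i h
    · simp only [hr', if_neg h]; exact hrn1R
  · refine Finset.le_inf' _ _ ?_
    intro k hk
    rw [Finset.mem_range] at hk
    by_cases hk1 : k = n + 1
    · rw [if_pos hk1]
      have e : ∑ i ∈ Finset.range (n+1), t' i * r' i = ∑ i ∈ Finset.range n, t i * r i := by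
        rw [Finset.sum_range_succ, hsum_eq n le_rfl]
        simp [ht']
      rw [e]
      have hfm : f n = b * ∑ i ∈ Finset.range n, t i * r i := by simp [hf]
      exact hfm ▸ Finset.inf'_le f (Finset.self_mem_range_succ n)
    · rw [if_neg hk1]
      by_cases hk2 : k = n
      · have e1 : r' k = r (n - 1) := by simp [hr', hk2]
        have e2 : ∑ i ∈ Finset.range k, t' i * r' i = ∑ i ∈ Finset.range n, t i * r i := by
          rw [hk2, hsum_eq n le_rfl]
        rw [e1, e2]
        have hfm : f n = b * ∑ i ∈ Finset.range n, t i * r i := by simp [hf]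
        have h1 : v ≤ b * ∑ i ∈ Finset.range n, t i * r i :=
          hfm ▸ Finset.inf'_le f (Finset.self_mem_range_succ n)
        have h2 : 0 ≤ dstar (r (n-1)) := hd0 _ hrn1 hrn1R
        linarith
      · have hkn : k < n := by omega
        have e1 : r' k = r k := by simp [hr', if_pos hkn]
        rw [e1, hsum_eq k hkn.le]
        have hfk : f k = dstar (r k) + b * ∑ i ∈ Finset.range k, t i * r i := by
          simp only [hf]
          rw [if_neg hk2]
        exact hfk ▸ Finset.inf'_le f (Finset.mem_range.2 (by omega))


lemma key_hat' (Mt Mr : ℕ) (b : ℝ) (hb : 0 < b) (dstar : ℝ → ℝ)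
    (m : ℕ) (hm : 1 ≤ m) (n : ℕ) (hn : 1 ≤ n) (v : ℝ)
    (hv : v ∈ lsSet Mt Mr b dstar m) :
    ∃ v' ∈ lsHat Mt Mr b dstar n, v - b * m * (min Mt Mr : ℝ) / n ≤ v' := by
  obtain ⟨t, r, ht0, hts, hr0, hrm, hru, rfl⟩ := hv
  exact key_hat Mt Mr b hb dstar m hm t r ht0 hts hr0 hrm hru n hn

theorem stmt_3 (Mt Mr : ℕ) (hMt : 1 ≤ Mt) (hMr : 1 ≤ Mr) (b : ℝ) (hb : 0 < b)
    (dstar : ℝ → ℝ)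
    -- `dstar` is the piecewise-linear function connecting the points
    -- `(k, (Mt - k)(Mr - k))` for `k = 0, 1, …, min Mt Mr`.
    (hd : ∀ k : ℕ, k < min Mt Mr → ∀ x ∈ Set.Icc (k : ℝ) ((k : ℝ) + 1),
      dstar x = ((Mt : ℝ) - k) * ((Mr : ℝ) - k)
        + (x - k) * (((Mt : ℝ) - (k + 1)) * ((Mr : ℝ) - (k + 1))
          - ((Mt : ℝ) - k) * ((Mr : ℝ) - k)))
    (Δ Δhat : ℕ → ℝ)
    (hΔ : ∀ n, Δ n = sSup { v : ℝ | ∃ t r : ℕ → ℝ,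
        (∀ i, 0 ≤ t i) ∧ (∑ i ∈ Finset.range n, t i) = 1 ∧
        (0 ≤ r 0) ∧ (∀ i j, i ≤ j → j < n → r i ≤ r j) ∧
        (∀ i < n, r i ≤ (min Mt Mr : ℝ)) ∧
        v = (Finset.range (n + 1)).inf' Finset.nonempty_range_add_one (fun k =>
          if k = n then b * ∑ i ∈ Finset.range n, t i * r i
          else dstar (r k) + b * ∑ i ∈ Finset.range k, t i * r i) })
    (hΔhat : ∀ n, Δhat n = sSup { v : ℝ | ∃ r : ℕ → ℝ,
        (0 ≤ r 0) ∧ (∀ i j, i ≤ j → j < n → r i ≤ r j) ∧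
        (∀ i < n, r i ≤ (min Mt Mr : ℝ)) ∧
        v = (Finset.range (n + 1)).inf' Finset.nonempty_range_add_one (fun k =>
          if k = n then b * ∑ i ∈ Finset.range n, (1 / (n : ℝ)) * r i
          else dstar (r k) + b * ∑ i ∈ Finset.range k, (1 / (n : ℝ)) * r i) }) :
    (∀ n, 1 ≤ n → Δ n ≤ Δ (n + 1)) ∧
    (∀ n, 1 ≤ n → Δ n ≤ (Mt : ℝ) * Mr) ∧
    ∃ l : ℝ, Tendsto Δ atTop (nhds l) ∧ Tendsto Δhat atTop (nhds l) := by
  classical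
  have hΔS : ∀ k, Δ k = sSup (lsSet Mt Mr b dstar k) := hΔ
  have hΔhatS : ∀ k, Δhat k = sSup (lsHat Mt Mr b dstar k) := hΔhat
  have hR0 : (0:ℝ) ≤ (min Mt Mr : ℝ) := le_min (Nat.cast_nonneg _) (Nat.cast_nonneg _)
  have hdb : ∀ x, 0 ≤ x → x ≤ (min Mt Mr : ℝ) → 0 ≤ dstar x ∧ dstar x ≤ (Mt : ℝ) * Mr :=
    fun x hx0 hxM => dstar_bounds Mt Mr hMt hMr dstar hd x hx0 hxM
  -- upper bound on elements of lsSet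
  have hub : ∀ k, 1 ≤ k → ∀ v ∈ lsSet Mt Mr b dstar k, v ≤ (Mt:ℝ) * Mr := by
    rintro k hk v ⟨t, r, ht0, hts, hr0, hrm, hru, rfl⟩
    have h0 : (0:ℕ) ∈ Finset.range (k+1) := Finset.mem_range.2 (by omega)
    refine le_trans (Finset.inf'_le _ h0) ?_
    rw [if_neg (by omega : (0:ℕ) ≠ k)]
    simp only [Finset.range_zero, Finset.sum_empty, mul_zero, add_zero]
    exact (hdb (r 0) hr0 (hru 0 (by omega))).2
  have hbdd : ∀ k, BddAbove (lsSet Mt Mr b dstar k) := by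
    intro k
    rcases Nat.eq_zero_or_pos k with rfl | hk
    · refine ⟨0, ?_⟩
      rintro v ⟨t, r, _, hts, _⟩
      simp at hts
    · exact ⟨_, fun v hv => hub k hk v hv⟩
  -- the hat set is nonempty with a nonnegative element
  have hhatne : ∀ k, ∃ v ∈ lsHat Mt Mr b dstar k, 0 ≤ v := by
    intro k
    refine ⟨_, ⟨fun _ => 0, le_rfl, fun _ _ _ _ => le_rfl, fun i _ => hR0, rfl⟩, ?_⟩
    refine Finset.le_inf' _ _ ?_
    intro j hj
    by_cases h : j = k
    · rw [if_pos h]; simp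
    · rw [if_neg h]
      have h1 : (0:ℝ) ≤ dstar 0 := (hdb 0 le_rfl hR0).1
      simp only [mul_zero, Finset.sum_const_zero]
      linarith
  have hsubset : ∀ k, 1 ≤ k → lsHat Mt Mr b dstar k ⊆ lsSet Mt Mr b dstar k := by
    rintro k hk v ⟨r, h1, h2, h3, h4⟩
    have hk0 : (k:ℝ) ≠ 0 := Nat.cast_ne_zero.2 (by omega)
    refine ⟨fun _ => 1/(k:ℝ), r, fun i => by positivity, ?_, h1, h2, h3, h4⟩
    rw [Finset.sum_const, Finset.card_range, nsmul_eq_mul]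
    field_simp
  have hSne : ∀ k, 1 ≤ k → ∃ v ∈ lsSet Mt Mr b dstar k, 0 ≤ v := by
    intro k hk
    obtain ⟨v, hv, hv0⟩ := hhatne k
    exact ⟨v, hsubset k hk hv, hv0⟩
  have hΔ0 : Δ 0 = 0 := by
    rw [hΔS 0]
    have he : lsSet Mt Mr b dstar 0 = ∅ := by
      refine Set.eq_empty_iff_forall_notMem.2 ?_
      rintro v ⟨t, r, _, hts, _⟩
      simp at hts
    rw [he, Real.sSup_empty]
  have hmono : Monotone Δ := by
    apply monotone_nat_of_le_succ
    intro k
    rcases Nat.eq_zero_or_pos k with rfl | hk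
    · rw [hΔ0, hΔS 1]
      obtain ⟨v, hv, hv0⟩ := hSne 1 le_rfl
      exact le_trans hv0 (le_csSup (hbdd 1) hv)
    · rw [hΔS k, hΔS (k+1)]
      obtain ⟨v0, hv0, _⟩ := hSne k hk
      refine csSup_le ⟨v0, hv0⟩ ?_
      intro v hv
      obtain ⟨v', hv', hle⟩ := mono_step Mt Mr b dstar (fun x hx0 hxM => (hdb x hx0 hxM).1) k hk v hv
      exact le_trans hle (le_csSup (hbdd (k+1)) hv')
  have hΔub : ∀ k, 1 ≤ k → Δ k ≤ (Mt:ℝ) * Mr := by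
    intro k hk
    rw [hΔS k]
    obtain ⟨v0, hv0, _⟩ := hSne k hk
    exact csSup_le ⟨v0, hv0⟩ (hub k hk)
  have hrange : BddAbove (Set.range Δ) := by
    refine ⟨(Mt:ℝ) * Mr, ?_⟩
    rintro x ⟨k, rfl⟩
    rcases Nat.eq_zero_or_pos k with rfl | hk
    · rw [hΔ0]; positivity
    · exact hΔub k hk
  refine ⟨fun n hn => hmono (Nat.le_succ n), hΔub, ?_⟩
  set l : ℝ := ⨆ k, Δ k with hl
  have hΔtend : Tendsto Δ atTop (nhds l) := tendsto_atTop_ciSup hmono hrange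
  have hΔle_l : ∀ k, Δ k ≤ l := fun k => le_ciSup hrange k
  have hhatle : ∀ k, 1 ≤ k → Δhat k ≤ Δ k := by
    intro k hk
    rw [hΔS k, hΔhatS k]
    obtain ⟨v0, hv0, _⟩ := hhatne k
    exact csSup_le_csSup (hbdd k) ⟨v0, hv0⟩ (hsubset k hk)
  refine ⟨l, hΔtend, tendsto_order.2 ⟨?_, ?_⟩⟩
  · -- lower bound
    intro a ha
    obtain ⟨m0, hm0⟩ := exists_lt_of_lt_ciSup ha
    set m1 := max m0 1 with hm1def
    have hm11 : 1 ≤ m1 := le_max_right _ _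
    have ham : a < sSup (lsSet Mt Mr b dstar m1) := by
      rw [← hΔS m1]
      exact lt_of_lt_of_le hm0 (hmono (le_max_left _ _))
    obtain ⟨v0, hv0, _⟩ := hSne m1 hm11
    obtain ⟨v, hvS, hav⟩ := exists_lt_of_lt_csSup ⟨v0, hv0⟩ ham
    set C : ℝ := b * m1 * (min Mt Mr : ℝ) with hC
    have hC0 : 0 ≤ C := mul_nonneg (mul_nonneg hb.le (Nat.cast_nonneg _)) hR0
    have hva : 0 < v - a := sub_pos.2 hav
    have hlow : ∀ n, 1 ≤ n → v - C / n ≤ Δhat n := by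
      intro n hn
      obtain ⟨v', hv', hle⟩ := key_hat' Mt Mr b hb dstar m1 hm11 n hn v hvS
      rw [hΔhatS n]
      exact le_trans hle (le_csSup (BddAbove.mono (hsubset n hn) (hbdd n)) hv')
    filter_upwards [eventually_ge_atTop (max 1 (⌈C / (v - a)⌉₊ + 1))] with n hn
    have hn1 : 1 ≤ n := le_trans (le_max_left _ _) hn
    have hn2 : ⌈C / (v - a)⌉₊ + 1 ≤ n := le_trans (le_max_right _ _) hn
    have hn0 : (0:ℝ) < n := by exact_mod_cast hn1
    have h1 : C / (v - a) < (n:ℝ) := by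
      refine lt_of_le_of_lt (Nat.le_ceil _) ?_
      exact_mod_cast hn2
    have hcn : C / (n:ℝ) < v - a := by
      rw [div_lt_iff₀ hn0]
      have h2 := (div_lt_iff₀ hva).1 h1
      nlinarith
    have h3 := hlow n hn1
    linarith
  · -- upper bound
    intro a ha
    filter_upwards [eventually_ge_atTop 1] with n hn
    exact lt_of_le_of_lt (le_trans (hhatle n hn) (hΔle_l n)) ha
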